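/- arXiv:1908.02518 — 10 statements merged into one kernel-verified Lean document; each statement's English description precedes it below -/
import Mathlib

section
/- Let F be a field, let I and J be finite linearly ordered index sets, and let D be an I × J matrix over F. Suppose indices i₀ ∈ I and j₀ ∈ J satisfy: D_{i₀ j₀} ≠ 0, D_{i j₀} = 0 for all i > i₀, and D_{i₀ j} = 0 for all j < j₀ (all entries of D below or to the left of the position (i₀, j₀) vanish). Then for every regular upper triangular J × J matrix V over F such that R = D·V is reduced, the column R_{j₀} is nonzero and its pivot index is i₀. -/
/-- `i` is the pivot index of the column vector `v`: the largest index carrying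
a nonzero entry (in particular `v ≠ 0`). -/
def IsPivot {I F : Type*} [LinearOrder I] [Zero F] (v : I → F) (i : I) : Prop :=
  v i ≠ 0 ∧ ∀ i', v i' ≠ 0 → i' ≤ i

/-- A matrix is reduced if no two of its nonzero columns have the same pivot index. -/
def ReducedMat {I J F : Type*} [LinearOrder I] [Zero F] (M : Matrix I J F) : Prop :=
  ∀ j₁ j₂ i, IsPivot (fun r => M r j₁) i → IsPivot (fun r => M r j₂) i → j₁ = j₂

/-- Every nonzero vector over a finite linear order has a pivot. -/
theorem exists_isPivot {I F : Type*} [Fintype I] [LinearOrder I] [Zero F]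
    (v : I → F) (hv : ∃ i, v i ≠ 0) : ∃ p, IsPivot v p := by
  classical
  obtain ⟨i, hi⟩ := hv
  have hne : (Finset.univ.filter fun i => v i ≠ 0).Nonempty :=
    ⟨i, by simp [hi]⟩
  refine ⟨(Finset.univ.filter fun i => v i ≠ 0).max' hne, ?_, ?_⟩
  · have := (Finset.univ.filter fun i => v i ≠ 0).max'_mem hne
    simpa using this
  · intro i' hi'
    exact Finset.le_max' _ _ (by simp [hi'])

/-- Apparent pairs are persistence pairs: if all entries of `D` below or to the
left of the nonzero position `(i₀, j₀)` vanish, then for every regular upper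
triangular `V` such that `R = D·V` is reduced, the column `R_{j₀}` is nonzero
with pivot index `i₀`. -/
theorem stmt2 {F I J : Type*} [Field F] [Fintype I] [Fintype J]
    [LinearOrder I] [LinearOrder J] [DecidableEq J]
    (D : Matrix I J F) (i₀ : I) (j₀ : J)
    (h₁ : D i₀ j₀ ≠ 0)
    (h₂ : ∀ i, i₀ < i → D i j₀ = 0)
    (h₃ : ∀ j, j < j₀ → D i₀ j = 0)
    (V : Matrix J J F) (hV : IsUnit V)
    (hVut : ∀ j₁ j₂ : J, j₂ < j₁ → V j₁ j₂ = 0)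
    (hred : ReducedMat (D * V)) :
    (fun r => (D * V) r j₀) ≠ 0 ∧ IsPivot (fun r => (D * V) r j₀) i₀ := by
  classical
  have hdet : IsUnit V.det := (Matrix.isUnit_iff_isUnit_det V).mp hV
  haveI : Invertible V := V.invertibleOfIsUnitDet hdet
  have hBT : V.BlockTriangular id := fun i j h => hVut i j h
  have hBTinv : (V⁻¹).BlockTriangular id :=
    Matrix.blockTriangular_inv_of_blockTriangular hBT
  have hVinvUT : ∀ j₁ j₂ : J, j₂ < j₁ → V⁻¹ j₁ j₂ = 0 := fun j₁ j₂ h => hBTinv h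
  -- D = (D * V) * V⁻¹
  have hDeq : ∀ i j, D i j = ∑ l, (D * V) i l * V⁻¹ l j := by
    intro i j
    have : D = (D * V) * V⁻¹ := by
      rw [Matrix.mul_assoc, Matrix.mul_nonsing_inv V hdet, Matrix.mul_one]
    conv_lhs => rw [this]
    rw [Matrix.mul_apply]
  -- diagonal relation
  have hdiag : V⁻¹ j₀ j₀ * V j₀ j₀ = 1 := by
    have h1 : (V⁻¹ * V) j₀ j₀ = 1 := by
      rw [Matrix.nonsing_inv_mul V hdet]; exact Matrix.one_apply_eq j₀
    rw [Matrix.mul_apply] at h1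
    have h2 : ∑ k, V⁻¹ j₀ k * V k j₀ = V⁻¹ j₀ j₀ * V j₀ j₀ := by
      refine Finset.sum_eq_single j₀ ?_ (fun h => (h (Finset.mem_univ _)).elim)
      intro k _ hk
      rcases lt_or_gt_of_ne hk with h | h
      · rw [hVinvUT j₀ k h, zero_mul]
      · rw [hVut k j₀ h, mul_zero]
    rw [← h1, h2]
  have hVjj : V j₀ j₀ ≠ 0 := right_ne_zero_of_mul_eq_one hdiag
  -- entry of R at (i₀, j₀)
  have hR0 : (D * V) i₀ j₀ = D i₀ j₀ * V j₀ j₀ := by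
    rw [Matrix.mul_apply]
    refine Finset.sum_eq_single j₀ ?_ (fun h => (h (Finset.mem_univ _)).elim)
    intro k _ hk
    rcases lt_or_gt_of_ne hk with h | h
    · rw [h₃ k h, zero_mul]
    · rw [hVut k j₀ h, mul_zero]
  have hR0ne : (D * V) i₀ j₀ ≠ 0 := by rw [hR0]; exact mul_ne_zero h₁ hVjj
  -- the key claim: nothing below i₀ in column j₀ of R
  have key : ∀ i, (D * V) i j₀ ≠ 0 → i ≤ i₀ := by
    by_contra hkey
    push_neg at hkey
    obtain ⟨i', hi'ne, hi'gt⟩ := hkey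
    -- pivot p of column j₀
    obtain ⟨p, hp⟩ := exists_isPivot (fun r => (D * V) r j₀) ⟨i', hi'ne⟩
    have hpi₀ : i₀ < p := lt_of_lt_of_le hi'gt (hp.2 i' hi'ne)
    -- coefficients
    set c : J → F := fun l => V j₀ j₀ * V⁻¹ l j₀ with hc
    set s : Finset J := Finset.univ.filter (· < j₀) with hs
    -- w i = V j₀ j₀ * D i j₀ - R i j₀
    have hw : ∀ i, ∑ l ∈ s, c l * (D * V) i l
        = V j₀ j₀ * D i j₀ - (D * V) i j₀ := by
      intro i
      have h1 : V j₀ j₀ * D i j₀ = ∑ l, c l * (D * V) i l := by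
        rw [hDeq i j₀, Finset.mul_sum]
        refine Finset.sum_congr rfl fun l _ => by ring
      have h2 : ∑ l, c l * (D * V) i l
          = c j₀ * (D * V) i j₀ + ∑ l ∈ Finset.univ.erase j₀, c l * (D * V) i l := by
        rw [← Finset.add_sum_erase _ _ (Finset.mem_univ j₀)]
      have hcj₀ : c j₀ = 1 := by show V j₀ j₀ * V⁻¹ j₀ j₀ = 1; rw [mul_comm]; exact hdiag
      have h3 : ∑ l ∈ Finset.univ.erase j₀, c l * (D * V) i l
          = ∑ l ∈ s, c l * (D * V) i l := by
        refine (Finset.sum_subset ?_ ?_).symm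
        · intro l hl
          rw [hs] at hl
          simp only [Finset.mem_filter] at hl
          exact Finset.mem_erase.mpr ⟨ne_of_lt hl.2, Finset.mem_univ l⟩
        · intro l hl hlns
          have hlne : l ≠ j₀ := (Finset.mem_erase.mp hl).1
          have : ¬ l < j₀ := by
            intro h
            exact hlns (by rw [hs]; simp [h])
          have hgt : j₀ < l := lt_of_le_of_ne (not_lt.mp this) (Ne.symm hlne)
          rw [hc]
          simp [hVinvUT l j₀ hgt]
      rw [h1, h2, hcj₀, h3]
      ring
    -- w p ≠ 0
    have hwp : ∑ l ∈ s, c l * (D * V) p l ≠ 0 := by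
      rw [hw p, h₂ p hpi₀, mul_zero, zero_sub, neg_ne_zero]
      exact hp.1
    -- the support set t
    set t : Finset J := s.filter (fun l => ∃ i, c l * (D * V) i l ≠ 0) with ht
    have hwt : ∀ i, ∑ l ∈ s, c l * (D * V) i l = ∑ l ∈ t, c l * (D * V) i l := by
      intro i
      refine (Finset.sum_subset (Finset.filter_subset _ _) ?_).symm
      intro l hl hlnt
      have hnex : ¬ ∃ i, c l * (D * V) i l ≠ 0 :=
        fun hex => hlnt (Finset.mem_filter.mpr ⟨hl, hex⟩)
      push_neg at hnex
      exact hnex i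
    -- t is nonempty
    have hwtp : ∑ l ∈ t, c l * (D * V) p l ≠ 0 := by rw [← hwt]; exact hwp
    -- pivot assignment
    have hpivots : ∀ l ∈ t, ∃ q, IsPivot (fun i => (D * V) i l) q := by
      intro l hl
      rw [ht] at hl
      obtain ⟨i, hi⟩ := (Finset.mem_filter.mp hl).2
      exact exists_isPivot _ ⟨i, fun h => hi (by rw [h, mul_zero])⟩
    set f : J → I := fun l =>
      if h : ∃ q, IsPivot (fun i => (D * V) i l) q then h.choose else p with hf
    have hfspec : ∀ l ∈ t, IsPivot (fun i => (D * V) i l) (f l) := by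
      intro l hl
      have h := hpivots l hl
      rw [hf]; simp only [dif_pos h]; exact h.choose_spec
    have htne : t.Nonempty := by
      obtain ⟨l, hl, hlne⟩ := Finset.exists_ne_zero_of_sum_ne_zero hwtp
      exact ⟨l, hl⟩
    obtain ⟨l₀, hl₀t, hl₀max⟩ := Finset.exists_max_image t f htne
    have hl₀lt : l₀ < j₀ := by
      have := Finset.mem_filter.mp hl₀t |>.1
      rw [hs] at this
      exact (Finset.mem_filter.mp this).2
    -- p ≤ f l₀
    have hple : p ≤ f l₀ := by
      obtain ⟨l, hl, hlne⟩ := Finset.exists_ne_zero_of_sum_ne_zero hwtp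
      have hRne : (D * V) p l ≠ 0 := fun h => hlne (by rw [h, mul_zero])
      exact le_trans ((hfspec l hl).2 p hRne) (hl₀max l hl)
    -- f l₀ ≠ p (else reducedness forces l₀ = j₀)
    have hfne : f l₀ ≠ p := by
      intro h
      have := hred l₀ j₀ p (h ▸ hfspec l₀ hl₀t) hp
      exact absurd this (ne_of_lt hl₀lt)
    have hplt : p < f l₀ := lt_of_le_of_ne hple (Ne.symm hfne)
    set q := f l₀ with hq
    -- w q = 0
    have hwq0 : ∑ l ∈ t, c l * (D * V) q l = 0 := by
      rw [← hwt, hw q]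
      have hRq : (D * V) q j₀ = 0 := by
        by_contra h
        exact absurd (hp.2 q h) (not_le.mpr hplt)
      rw [h₂ q (lt_trans hpi₀ hplt), hRq, mul_zero, sub_zero]
    -- but w q ≠ 0: only the l₀ term survives
    have hwqne : ∑ l ∈ t, c l * (D * V) q l ≠ 0 := by
      have hsum : ∑ l ∈ t, c l * (D * V) q l = c l₀ * (D * V) q l₀ := by
        refine Finset.sum_eq_single l₀ ?_ (fun h => (h hl₀t).elim)
        intro l hl hlne
        have hfl : f l ≠ f l₀ := by
          intro h
          exact hlne (hred l l₀ (f l) (hfspec l hl) (h ▸ hfspec l₀ hl₀t))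
        have hflt : f l < q := lt_of_le_of_ne (hl₀max l hl) hfl
        have : (D * V) q l = 0 := by
          by_contra h
          exact absurd ((hfspec l hl).2 q h) (not_le.mpr hflt)
        rw [this, mul_zero]
      rw [hsum]
      have hc₀ : c l₀ ≠ 0 := by
        rw [ht] at hl₀t
        obtain ⟨i, hi⟩ := (Finset.mem_filter.mp hl₀t).2
        exact fun h => hi (by rw [h, zero_mul])
      exact mul_ne_zero hc₀ (hfspec l₀ hl₀t).1
    exact hwqne hwq0
  refine ⟨?_, hR0ne, key⟩
  intro h
  exact hR0ne (congrFun h i₀)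
end

section
/- Let K be a finite abstract simplicial complex and ≤ a linear order on K extending the face relation. Then the apparent pairs of ≤ form a discrete vector field on K: in every apparent pair (σ, τ) the simplex σ is a facet of τ, and if (σ, τ) and (σ′, τ′) are apparent pairs with {σ, τ} ∩ {σ′, τ′} ≠ ∅, then σ = σ′ and τ = τ′. -/
/-- `K` is a finite abstract simplicial complex: a finite family of nonempty
finite sets closed under taking nonempty subsets. -/
def IsComplex (K : Finset (Finset ℕ)) : Prop :=
  (∀ σ ∈ K, σ.Nonempty) ∧ (∀ σ ∈ K, ∀ τ : Finset ℕ, τ ⊆ σ → τ.Nonempty → τ ∈ K)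

/-- `σ` is a facet of `τ` (and `τ` a cofacet of `σ`). -/
def IsFacet (σ τ : Finset ℕ) : Prop := σ ⊆ τ ∧ τ.card = σ.card + 1

/-- A linear order on the simplices of `K` extending the face relation,
encoding a simplexwise filtration of `K`. -/
structure SimplexOrder (K : Finset (Finset ℕ)) where
  le : Finset ℕ → Finset ℕ → Prop
  refl : ∀ σ ∈ K, le σ σ
  trans : ∀ σ ∈ K, ∀ τ ∈ K, ∀ ρ ∈ K, le σ τ → le τ ρ → le σ ρ
  antisymm : ∀ σ ∈ K, ∀ τ ∈ K, le σ τ → le τ σ → σ = τ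
  total : ∀ σ ∈ K, ∀ τ ∈ K, le σ τ ∨ le τ σ
  face_le : ∀ σ ∈ K, ∀ τ ∈ K, σ ⊆ τ → le σ τ

/-- `(σ, τ)` is an apparent pair of the simplexwise filtration encoded by `L`:
`σ` is the maximum facet of `τ` in `K`, and `τ` is the minimum cofacet of `σ`
in `K`, with respect to the order `L`. -/
def ApparentPair (K : Finset (Finset ℕ)) (L : SimplexOrder K) (σ τ : Finset ℕ) : Prop :=
  σ ∈ K ∧ τ ∈ K ∧ IsFacet σ τ ∧
  (∀ σ' ∈ K, IsFacet σ' τ → L.le σ' σ) ∧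
  (∀ τ' ∈ K, IsFacet σ τ' → L.le τ τ')

lemma no_chain (K : Finset (Finset ℕ)) (hK : IsComplex K) (L : SimplexOrder K)
    (σ τ ρ : Finset ℕ) (h1 : ApparentPair K L σ τ) (h2 : ApparentPair K L τ ρ) : False := by
  obtain ⟨hσ, hτ, ⟨hst, hcst⟩, hmax1, hmin1⟩ := h1
  obtain ⟨_, hρ, ⟨htr, hctr⟩, hmax2, hmin2⟩ := h2
  -- pick v ∈ ρ \ τ
  have hcard : τ.card < ρ.card := by omega
  have hss : τ ⊂ ρ := htr.ssubset_of_ne (by intro h; subst h; omega)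
  obtain ⟨v, hvρ, hvτ⟩ := Finset.exists_of_ssubset hss
  have hvσ : v ∉ σ := fun h => hvτ (hst h)
  set π := insert v σ with hπ
  have hπρ : π ⊆ ρ := Finset.insert_subset hvρ (hst.trans htr)
  have hπK : π ∈ K := hK.2 ρ hρ π hπρ ⟨v, Finset.mem_insert_self v σ⟩
  have hπcard : π.card = σ.card + 1 := Finset.card_insert_of_notMem hvσ
  have hfacetρ : IsFacet π ρ := ⟨hπρ, by omega⟩
  have hcofσ : IsFacet σ π := ⟨Finset.subset_insert v σ, hπcard⟩
  have h1' : L.le π τ := hmax2 π hπK hfacetρ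
  have h2' : L.le τ π := hmin1 π hπK hcofσ
  have : τ = π := L.antisymm τ hτ π hπK h2' h1'
  exact hvτ (this ▸ Finset.mem_insert_self v σ)

/-- The apparent pairs of a simplexwise filtration form a discrete vector field:
in every apparent pair `σ` is a facet of `τ`, and no simplex belongs to two
distinct apparent pairs. -/
theorem stmt3 (K : Finset (Finset ℕ)) (hK : IsComplex K) (L : SimplexOrder K) :
    (∀ σ τ : Finset ℕ, ApparentPair K L σ τ → IsFacet σ τ) ∧
    (∀ σ τ σ' τ' : Finset ℕ, ApparentPair K L σ τ → ApparentPair K L σ' τ' →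
      (σ = σ' ∨ σ = τ' ∨ τ = σ' ∨ τ = τ') → σ = σ' ∧ τ = τ') := by
  constructor
  · exact fun σ τ h => h.2.2.1
  · rintro σ τ σ' τ' h1 h2 (rfl | rfl | rfl | rfl)
    · have hττ' : τ = τ' := L.antisymm τ h1.2.1 τ' h2.2.1
        (h1.2.2.2.2 τ' h2.2.1 h2.2.2.1) (h2.2.2.2.2 τ h1.2.1 h1.2.2.1)
      exact ⟨rfl, hττ'⟩
    · exact (no_chain K hK L σ' σ τ h2 h1).elim
    · exact (no_chain K hK L σ τ τ' h1 h2).elim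
    · have hσσ' : σ = σ' := L.antisymm σ h1.1 σ' h2.1
        (h2.2.2.2.1 σ h1.1 h1.2.2.1) (h1.2.2.2.1 σ' h2.1 h2.2.2.1)
      exact ⟨hσσ', rfl⟩
end

section
/- Let K be a finite abstract simplicial complex with simplices enumerated σ_1 < σ_2 < … < σ_m according to a linear order ≤ extending the face relation. Define f : K → ℝ by f(σ_j) = i if (σ_i, σ_j) is an apparent pair of ≤ for some i, and f(σ_j) = j otherwise. Then f is a discrete Morse function, and its gradient pairs (the facet pairs (σ, τ) with f(σ) = f(τ)) are exactly the apparent pairs of ≤. -/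
/-- Given an enumeration `e : Fin m → Finset ℕ` of the simplices in filtration
order, `(i, j)` indexes an apparent pair if `e i` is the facet of `e j` with
maximal index and `e j` is the cofacet of `e i` with minimal index. -/
def ApparentIdx (m : ℕ) (e : Fin m → Finset ℕ) (i j : Fin m) : Prop :=
  IsFacet (e i) (e j) ∧ (∀ i', IsFacet (e i') (e j) → i' ≤ i) ∧
  (∀ j', IsFacet (e i) (e j') → j ≤ j')

open Classical in
/-- The function `f` with `f(σ_j) = i` if `(σ_i, σ_j)` is an apparent pair, and
`f(σ_j) = j` otherwise. -/
noncomputable def apparentMorse (m : ℕ) (e : Fin m → Finset ℕ) (j : Fin m) : ℝ :=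
  if h : ∃ i, ApparentIdx m e i j then ((h.choose : ℕ) : ℝ) else ((j : ℕ) : ℝ)

section Aux

variable {K : Finset (Finset ℕ)} {m : ℕ} {e : Fin m → Finset ℕ}

lemma apparent_uniq_left {i i' j : Fin m} (h : ApparentIdx m e i j)
    (h' : ApparentIdx m e i' j) : i = i' :=
  le_antisymm (h'.2.1 i h.1) (h.2.1 i' h'.1)

lemma apparent_uniq_right {i j j' : Fin m} (h : ApparentIdx m e i j)
    (h' : ApparentIdx m e i j') : j = j' :=
  le_antisymm (h.2.2 j' h'.1) (h'.2.2 j h.1)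

lemma apparentMorse_of {i j : Fin m} (hij : ApparentIdx m e i j) :
    apparentMorse m e j = ((i : ℕ) : ℝ) := by
  have hex : ∃ i, ApparentIdx m e i j := ⟨i, hij⟩
  rw [apparentMorse, dif_pos hex, apparent_uniq_left hex.choose_spec hij]

lemma apparentMorse_of_not {j : Fin m} (h : ¬ ∃ i, ApparentIdx m e i j) :
    apparentMorse m e j = ((j : ℕ) : ℝ) := by
  rw [apparentMorse, dif_neg h]

lemma facet_lt (hface : ∀ i j : Fin m, e i ⊆ e j → i ≤ j)
    {i j : Fin m} (h : IsFacet (e i) (e j)) : i < j := by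
  rcases lt_or_eq_of_le (hface i j h.1) with h' | h'
  · exact h'
  · subst h'
    have := h.2
    omega

lemma apparentMorse_le (hface : ∀ i j : Fin m, e i ⊆ e j → i ≤ j)
    {j : Fin m} : apparentMorse m e j ≤ ((j : ℕ) : ℝ) := by
  by_cases h : ∃ i, ApparentIdx m e i j
  · obtain ⟨i, hi⟩ := h
    rw [apparentMorse_of hi]
    have := facet_lt hface hi.1
    exact_mod_cast (this.le : i ≤ j)
  · rw [apparentMorse_of_not h]

lemma no_chain_s4 (hK : IsComplex K)
    (hsurj : ∀ σ : Finset ℕ, σ ∈ K ↔ ∃ i, e i = σ)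
    {i j k : Fin m} (h1 : ApparentIdx m e i j) (h2 : ApparentIdx m e j k) : False := by
  obtain ⟨⟨hij, hcij⟩, hmax1, hmin1⟩ := h1
  obtain ⟨⟨hjk, hcjk⟩, hmax2, hmin2⟩ := h2
  have hne : e k ≠ e j := by intro h; rw [h] at hcjk; omega
  obtain ⟨w, hwk, hwj⟩ : ∃ w ∈ e k, w ∉ e j := by
    by_contra hc; push_neg at hc
    exact hne (Finset.eq_of_subset_of_card_le (fun x hx => hc x hx) (by omega))
  have hwi : w ∉ e i := fun h => hwj (hij h)
  have hsub : insert w (e i) ⊆ e k := Finset.insert_subset hwk (hij.trans hjk)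
  have hcard : (insert w (e i)).card = (e i).card + 1 := Finset.card_insert_of_notMem hwi
  have hσK : insert w (e i) ∈ K :=
    hK.2 (e k) ((hsurj (e k)).2 ⟨k, rfl⟩) _ hsub ⟨w, Finset.mem_insert_self w _⟩
  obtain ⟨i'', hi''⟩ := (hsurj _).1 hσK
  have f1 : IsFacet (e i'') (e k) := by rw [hi'']; exact ⟨hsub, by omega⟩
  have f2 : IsFacet (e i) (e i'') := by rw [hi'']; exact ⟨Finset.subset_insert _ _, hcard⟩
  have hle1 : i'' ≤ j := hmax2 i'' f1
  have hle2 : j ≤ i'' := hmin1 i'' f2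
  have heq : e i'' = e j := by rw [le_antisymm hle1 hle2]
  rw [hi''] at heq
  exact hwj (heq ▸ Finset.mem_insert_self w (e i))

end Aux

/-- For a simplicial complex `K` with simplices enumerated `σ_1 < … < σ_m` in a
linear order extending the face relation, the function `f` with `f(σ_j) = i` if
`(σ_i, σ_j)` is an apparent pair and `f(σ_j) = j` otherwise is a discrete Morse
function whose gradient pairs are exactly the apparent pairs. -/
theorem stmt4 (K : Finset (Finset ℕ)) (hK : IsComplex K)
    (m : ℕ) (e : Fin m → Finset ℕ)
    (hinj : Function.Injective e)
    (hsurj : ∀ σ : Finset ℕ, σ ∈ K ↔ ∃ i, e i = σ)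
    (hface : ∀ i j : Fin m, e i ⊆ e j → i ≤ j) :
    (∀ i j : Fin m, e i ⊆ e j → apparentMorse m e i ≤ apparentMorse m e j) ∧
    (∀ i j i' j' : Fin m,
      IsFacet (e i) (e j) → apparentMorse m e i = apparentMorse m e j →
      IsFacet (e i') (e j') → apparentMorse m e i' = apparentMorse m e j' →
      (i = i' ∨ i = j' ∨ j = i' ∨ j = j') → i = i' ∧ j = j') ∧
    (∀ i j : Fin m,
      (IsFacet (e i) (e j) ∧ apparentMorse m e i = apparentMorse m e j) ↔
      ApparentIdx m e i j) := by
  -- Part 3 first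
  have part3 : ∀ i j : Fin m,
      (IsFacet (e i) (e j) ∧ apparentMorse m e i = apparentMorse m e j) ↔
      ApparentIdx m e i j := by
    intro i j
    constructor
    · rintro ⟨hf, heq⟩
      have hlt : i < j := facet_lt hface hf
      by_cases hj : ∃ i₀, ApparentIdx m e i₀ j
      · obtain ⟨i₀, hi₀⟩ := hj
        have hfj : apparentMorse m e j = ((i₀ : ℕ) : ℝ) := apparentMorse_of hi₀
        by_cases hi : ∃ i₁, ApparentIdx m e i₁ i
        · obtain ⟨i₁, hi₁⟩ := hi
          exfalso
          have hfi : apparentMorse m e i = ((i₁ : ℕ) : ℝ) := apparentMorse_of hi₁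
          have : i₁ = i₀ := by
            have : ((i₁ : ℕ) : ℝ) = ((i₀ : ℕ) : ℝ) := by rw [← hfi, heq, hfj]
            exact Fin.ext (by exact_mod_cast this)
          subst this
          have c1 := hi₁.1.2
          have c2 := hi₀.1.2
          have c3 := hf.2
          omega
        · have hfi : apparentMorse m e i = ((i : ℕ) : ℝ) := apparentMorse_of_not hi
          have : i = i₀ := by
            have : ((i : ℕ) : ℝ) = ((i₀ : ℕ) : ℝ) := by rw [← hfi, heq, hfj]
            exact Fin.ext (by exact_mod_cast this)
          subst this
          exact hi₀
      · exfalso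
        have hfj : apparentMorse m e j = ((j : ℕ) : ℝ) := apparentMorse_of_not hj
        have hle : apparentMorse m e i ≤ ((i : ℕ) : ℝ) := apparentMorse_le hface
        rw [heq, hfj] at hle
        have : ((i : ℕ) : ℝ) < ((j : ℕ) : ℝ) := by exact_mod_cast hlt
        linarith
    · intro h
      refine ⟨h.1, ?_⟩
      have hfj : apparentMorse m e j = ((i : ℕ) : ℝ) := apparentMorse_of h
      have hfi : apparentMorse m e i = ((i : ℕ) : ℝ) := by
        apply apparentMorse_of_not
        rintro ⟨i₁, hi₁⟩
        exact no_chain_s4 hK hsurj hi₁ h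
      rw [hfi, hfj]
  refine ⟨?_, ?_, part3⟩
  · -- monotonicity
    intro i j hsub
    by_cases hij : i = j
    · subst hij; exact le_refl _
    · have hssub : e i ⊂ e j := ssubset_of_subset_of_ne hsub (fun h => hij (hinj h))
      have hiK : e i ∈ K := (hsurj _).2 ⟨i, rfl⟩
      have hjK : e j ∈ K := (hsurj _).2 ⟨j, rfl⟩
      have hine : (e i).Nonempty := hK.1 _ hiK
      by_cases hj : ∃ i₀, ApparentIdx m e i₀ j
      · obtain ⟨i₀, hi₀⟩ := hj
        rw [apparentMorse_of hi₀]
        -- find a facet of e j containing e i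
        obtain ⟨v, hvj, hvi⟩ := Finset.exists_of_ssubset hssub
        have hsub' : e i ⊆ (e j).erase v :=
          fun x hx => Finset.mem_erase.2 ⟨fun h => hvi (h ▸ hx), hsub hx⟩
        have hene : ((e j).erase v).Nonempty := hine.mono hsub'
        have heK : (e j).erase v ∈ K := hK.2 (e j) hjK _ (Finset.erase_subset _ _) hene
        obtain ⟨i'', hi''⟩ := (hsurj _).1 heK
        have hcard : ((e j).erase v).card = (e j).card - 1 := Finset.card_erase_of_mem hvj
        have hjpos : 0 < (e j).card := Finset.card_pos.2 (hK.1 _ hjK)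
        have hfacet : IsFacet (e i'') (e j) := by
          rw [hi'']; exact ⟨Finset.erase_subset _ _, by omega⟩
        have h1 : i ≤ i'' := hface i i'' (by rw [hi'']; exact hsub')
        have h2 : i'' ≤ i₀ := hi₀.2.1 i'' hfacet
        have h3 : apparentMorse m e i ≤ ((i : ℕ) : ℝ) := apparentMorse_le hface
        have : (i : ℕ) ≤ (i₀ : ℕ) := le_trans h1 h2
        calc apparentMorse m e i ≤ ((i : ℕ) : ℝ) := h3
          _ ≤ ((i₀ : ℕ) : ℝ) := by exact_mod_cast this
      · rw [apparentMorse_of_not hj]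
        have h3 : apparentMorse m e i ≤ ((i : ℕ) : ℝ) := apparentMorse_le hface
        have : (i : ℕ) ≤ (j : ℕ) := hface i j hsub
        calc apparentMorse m e i ≤ ((i : ℕ) : ℝ) := h3
          _ ≤ ((j : ℕ) : ℝ) := by exact_mod_cast this
  · -- discrete vector field
    intro i j i' j' hf heq hf' heq' hshare
    have h1 : ApparentIdx m e i j := (part3 i j).1 ⟨hf, heq⟩
    have h2 : ApparentIdx m e i' j' := (part3 i' j').1 ⟨hf', heq'⟩
    rcases hshare with h | h | h | h
    · subst h; exact ⟨rfl, apparent_uniq_right h1 h2⟩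
    · exact absurd (h ▸ h1) (fun h1' => no_chain_s4 hK hsurj h2 h1')
    · exact absurd (h ▸ h2) (fun h2' => no_chain_s4 hK hsurj h1 h2')
    · subst h; exact ⟨apparent_uniq_left h1 h2, rfl⟩
end

section
/- Let K be a finite abstract simplicial complex, f : K → ℝ a discrete Morse function, and ≤ a linear order on K extending the face relation such that f(σ) < f(τ) implies σ < τ (a simplexwise refinement of the sublevel set filtration of f). Then a pair (σ, τ) is a gradient pair of f if and only if (σ, τ) is an apparent pair of ≤ with f(σ) = f(τ). -/
/-- If `f` is a discrete Morse function on `K` and `L` is a simplexwise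
refinement of the sublevel set filtration of `f`, then the gradient pairs of
`f` are precisely the apparent pairs `(σ, τ)` of `L` with `f(σ) = f(τ)`. -/
theorem stmt5 (K : Finset (Finset ℕ)) (hK : IsComplex K)
    (f : Finset ℕ → ℝ)
    (hmono : ∀ σ ∈ K, ∀ τ ∈ K, σ ⊆ τ → f σ ≤ f τ)
    (hvf : ∀ σ τ σ' τ' : Finset ℕ, σ ∈ K → τ ∈ K → σ' ∈ K → τ' ∈ K →
      IsFacet σ τ → f σ = f τ → IsFacet σ' τ' → f σ' = f τ' →
      (σ = σ' ∨ σ = τ' ∨ τ = σ' ∨ τ = τ') → σ = σ' ∧ τ = τ')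
    (L : SimplexOrder K)
    (hrefine : ∀ σ ∈ K, ∀ τ ∈ K, f σ < f τ → L.le σ τ ∧ σ ≠ τ) :
    ∀ σ ∈ K, ∀ τ ∈ K,
      (IsFacet σ τ ∧ f σ = f τ) ↔ (ApparentPair K L σ τ ∧ f σ = f τ) := by
  intro σ hσ τ hτ
  constructor
  · rintro ⟨hfac, hf⟩
    refine ⟨⟨hσ, hτ, hfac, ?_, ?_⟩, hf⟩
    · intro σ' hσ' hfac'
      have h1 : f σ' ≤ f τ := hmono σ' hσ' τ hτ hfac'.1
      rcases lt_or_eq_of_le h1 with h | h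
      · exact (hrefine σ' hσ' σ hσ (by linarith)).1
      · have h2 := hvf σ τ σ' τ hσ hτ hσ' hτ hfac hf hfac' h
          (Or.inr (Or.inr (Or.inr rfl)))
        rw [← h2.1]
        exact L.refl σ hσ
    · intro τ' hτ' hfac'
      have h1 : f σ ≤ f τ' := hmono σ hσ τ' hτ' hfac'.1
      rcases lt_or_eq_of_le h1 with h | h
      · exact (hrefine τ hτ τ' hτ' (by linarith)).1
      · have h2 := hvf σ τ σ τ' hσ hτ hσ hτ' hfac hf hfac' h (Or.inl rfl)
        rw [← h2.2]
        exact L.refl τ hτ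
  · rintro ⟨hap, hf⟩
    exact ⟨hap.2.2.1, hf⟩
end

section
/- Let K be a finite abstract simplicial complex with vertices in ℕ, and let ≤ be the lexicographic order on K: σ < τ if |σ| < |τ|, or |σ| = |τ| and σ precedes τ colexicographically. Then (σ, τ) is an apparent pair of ≤ if and only if τ = σ ∪ {v} ∈ K, where v < min σ and v is the least natural number w ∉ σ with σ ∪ {w} ∈ K. -/
/-- The lexicographic order on simplices: first by dimension (cardinality),
then colexicographically by vertices. -/
def lexLe (σ τ : Finset ℕ) : Prop :=
  σ.card < τ.card ∨ (σ.card = τ.card ∧ toColex σ ≤ toColex τ)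

/-- `(σ, τ)` is an apparent pair of the order `le`: `σ` is the maximum facet of
`τ` in `K` and `τ` is the minimum cofacet of `σ` in `K`, with respect to `le`. -/
def ApparentPairLe (K : Finset (Finset ℕ)) (le : Finset ℕ → Finset ℕ → Prop)
    (σ τ : Finset ℕ) : Prop :=
  σ ∈ K ∧ τ ∈ K ∧ IsFacet σ τ ∧
  (∀ σ' ∈ K, IsFacet σ' τ → le σ' σ) ∧
  (∀ τ' ∈ K, IsFacet σ τ' → le τ τ')

lemma colex_insert_le_insert {σ : Finset ℕ} {v w : ℕ} (hv : v ∉ σ) (hw : w ∉ σ) :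
    toColex (insert v σ) ≤ toColex (insert w σ) ↔ v ≤ w := by
  constructor
  · intro h
    by_contra hlt
    push_neg at hlt
    have h2 : toColex (insert w σ) ≤ toColex (insert v σ) := by
      intro a ha hna
      rcases Finset.mem_insert.1 ha with rfl | ha'
      · refine ⟨v, Finset.mem_insert_self _ _, fun hc => ?_, hlt.le⟩
        rcases Finset.mem_insert.1 hc with rfl | hc'
        · exact hna (Finset.mem_insert_self _ _)
        · exact hv hc'
      · exact (hna (Finset.mem_insert_of_mem ha')).elim
    have heq : insert v σ = insert w σ := toColex.injective (le_antisymm h h2)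
    have : v ∈ insert w σ := heq ▸ Finset.mem_insert_self v σ
    rcases Finset.mem_insert.1 this with rfl | h'
    · exact Nat.lt_irrefl v hlt
    · exact hv h'
  · intro hle a ha hna
    rcases Finset.mem_insert.1 ha with rfl | ha'
    · have hne : a ≠ w := fun he => hna (he ▸ Finset.mem_insert_self _ _)
      refine ⟨w, Finset.mem_insert_self _ _, fun hc => ?_, hle⟩
      rcases Finset.mem_insert.1 hc with he | hc'
      · exact hne he.symm
      · exact hw hc'
    · exact (hna (Finset.mem_insert_of_mem ha')).elim

lemma facet_ex {σ τ : Finset ℕ} (h : IsFacet σ τ) : ∃ x ∉ σ, τ = insert x σ := by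
  obtain ⟨hsub, hcard⟩ := h
  have h1 : (τ \ σ).card = 1 := by
    rw [Finset.card_sdiff_of_subset hsub, hcard]; omega
  obtain ⟨x, hx⟩ := Finset.card_eq_one.1 h1
  have hxs : x ∉ σ := by
    have : x ∈ τ \ σ := hx ▸ Finset.mem_singleton_self x
    exact (Finset.mem_sdiff.1 this).2
  refine ⟨x, hxs, ?_⟩
  have h2 := Finset.sdiff_union_of_subset hsub
  rw [hx] at h2
  rw [← h2, Finset.insert_eq]

/-- For the lexicographic order on a simplicial complex `K`, `(σ, τ)` is an
apparent pair if and only if `τ = σ ∪ {v} ∈ K`, where `v < min σ` and `v` is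
the least vertex `w ∉ σ` with `σ ∪ {w} ∈ K`. -/
theorem stmt6 (K : Finset (Finset ℕ)) (hK : IsComplex K)
    (σ τ : Finset ℕ) (hσ : σ ∈ K) :
    ApparentPairLe K lexLe σ τ ↔
      ∃ v : ℕ, v ∉ σ ∧ τ = insert v σ ∧ insert v σ ∈ K ∧
        (∀ w ∈ σ, v < w) ∧
        (∀ w : ℕ, w ∉ σ → insert w σ ∈ K → v ≤ w) := by
  constructor
  · rintro ⟨-, hτK, hfacet, hmax, hmin⟩
    obtain ⟨v, hv, rfl⟩ := facet_ex hfacet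
    refine ⟨v, hv, rfl, hτK, ?_, ?_⟩
    · intro w hw
      have hvw : v ≠ w := fun h => hv (h ▸ hw)
      -- consider σ' = (insert v σ).erase w = insert v (σ.erase w)
      set ρ := σ.erase w with hρ
      have hvρ : v ∉ ρ := fun h => hv (Finset.mem_of_mem_erase h)
      have hwρ : w ∉ ρ := Finset.notMem_erase w σ
      have hσeq : σ = insert w ρ := (Finset.insert_erase hw).symm
      have hτeq : insert v σ = insert w (insert v ρ) := by
        rw [hσeq, Finset.insert_comm]
      have hσ' : insert v ρ ∈ K := by
        refine hK.2 _ hτK _ ?_ ⟨v, Finset.mem_insert_self _ _⟩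
        intro a ha
        rcases Finset.mem_insert.1 ha with rfl | ha'
        · exact Finset.mem_insert_self _ _
        · exact Finset.mem_insert_of_mem (Finset.mem_of_mem_erase ha')
      have hfacet' : IsFacet (insert v ρ) (insert v σ) := by
        constructor
        · rw [hτeq]; exact Finset.subset_insert _ _
        · rw [hτeq, Finset.card_insert_of_notMem, Finset.card_insert_of_notMem hvρ]
          rw [Finset.mem_insert]
          push_neg
          exact ⟨hvw.symm, hwρ⟩
      have hle := hmax _ hσ' hfacet'
      rcases hle with hlt | ⟨-, hcolex⟩
      · exfalso
        have : (insert v ρ).card = σ.card := by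
          rw [hσeq, Finset.card_insert_of_notMem hvρ, Finset.card_insert_of_notMem hwρ]
        omega
      · rw [hσeq] at hcolex
        have := (colex_insert_le_insert hvρ hwρ).1 hcolex
        exact lt_of_le_of_ne this hvw
    · intro w hw hwK
      have hfacet' : IsFacet σ (insert w σ) :=
        ⟨Finset.subset_insert _ _, Finset.card_insert_of_notMem hw⟩
      have hle := hmin _ hwK hfacet'
      rcases hle with hlt | ⟨-, hcolex⟩
      · exfalso
        rw [Finset.card_insert_of_notMem hv, Finset.card_insert_of_notMem hw] at hlt
        omega
      · exact (colex_insert_le_insert hv hw).1 hcolex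
  · rintro ⟨v, hv, rfl, hτK, hlt, hminimal⟩
    have hfacet : IsFacet σ (insert v σ) :=
      ⟨Finset.subset_insert _ _, Finset.card_insert_of_notMem hv⟩
    refine ⟨hσ, hτK, hfacet, ?_, ?_⟩
    · intro σ' hσ'K hf
      obtain ⟨hsub, hcard⟩ := hf
      have hcards : σ'.card = σ.card := by
        rw [Finset.card_insert_of_notMem hv] at hcard
        omega
      right
      refine ⟨hcards, ?_⟩
      -- σ' = (insert v σ).erase x for some x ∈ insert v σ
      obtain ⟨x, hx, hxτ⟩ : ∃ x ∈ insert v σ, σ' = (insert v σ).erase x := by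
        have h1 : ((insert v σ) \ σ').card = 1 := by
          rw [Finset.card_sdiff_of_subset hsub, hcard]; omega
        obtain ⟨x, hxeq⟩ := Finset.card_eq_one.1 h1
        have hxm : x ∈ (insert v σ) \ σ' := hxeq ▸ Finset.mem_singleton_self x
        rw [Finset.mem_sdiff] at hxm
        refine ⟨x, hxm.1, ?_⟩
        apply Finset.eq_of_subset_of_card_le
        · intro a ha
          rw [Finset.mem_erase]
          have : a ∉ (insert v σ) \ σ' := by rw [hxeq]; simp; rintro rfl; exact hxm.2 ha
          exact ⟨fun h => (h ▸ hxm.2) ha, hsub ha⟩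
        · rw [Finset.card_erase_of_mem hxm.1, hcard]; omega
      rcases Finset.mem_insert.1 hx with rfl | hxσ
      · rw [hxτ, Finset.erase_insert hv]
      · have hxv : x ≠ v := fun h => hv (h ▸ hxσ)
        have hρ : σ' = insert v (σ.erase x) := by
          rw [hxτ, Finset.erase_insert_of_ne hxv.symm]
        have hσeq : σ = insert x (σ.erase x) := (Finset.insert_erase hxσ).symm
        rw [hρ]
        conv_rhs => rw [hσeq]
        exact (colex_insert_le_insert (fun h => hv (Finset.mem_of_mem_erase h))
          (Finset.notMem_erase x σ)).2 (hlt x hxσ).le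
    · intro τ' hτ'K hf
      obtain ⟨w, hw, rfl⟩ := facet_ex hf
      right
      constructor
      · rw [Finset.card_insert_of_notMem hv, Finset.card_insert_of_notMem hw]
      · exact (colex_insert_le_insert hv hw).2 (hminimal w hw hτ'K)
end

section
/- Let K be a finite abstract simplicial complex with vertices in ℕ. The lexicographic gradient of K is the set of pairs (σ, σ ∪ {v}) where σ ∈ K, σ ∪ {v} ∈ K, v < min σ, and v is the least natural number w ∉ σ with σ ∪ {w} ∈ K. Then there exists a discrete Morse function on K whose gradient pairs are exactly the lexicographic gradient pairs; in particular, the lexicographic gradient is a discrete vector field on K. -/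
/-- `(σ, τ)` is a lexicographic gradient pair of `K`: `τ = σ ∪ {v} ∈ K`, where
`v < min σ` and `v` is the least vertex `w ∉ σ` with `σ ∪ {w} ∈ K`. -/
def LexGrad (K : Finset (Finset ℕ)) (σ τ : Finset ℕ) : Prop :=
  σ ∈ K ∧ ∃ v : ℕ, v ∉ σ ∧ τ = insert v σ ∧ τ ∈ K ∧
    (∀ w ∈ σ, v < w) ∧ (∀ w : ℕ, w ∉ σ → insert w σ ∈ K → v ≤ w)

namespace Stmt7Aux

noncomputable def mmin (ρ : Finset ℕ) : ℕ := if h : ρ.Nonempty then ρ.min' h else 0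

lemma mmin_mem {ρ : Finset ℕ} (h : ρ.Nonempty) : mmin ρ ∈ ρ := by
  rw [mmin, dif_pos h]; exact ρ.min'_mem h

lemma mmin_eq {ρ : Finset ℕ} {v : ℕ} (hv : v ∈ ρ) (h : ∀ w ∈ ρ, v ≤ w) :
    mmin ρ = v := by
  have hne : ρ.Nonempty := ⟨v, hv⟩
  rw [mmin, dif_pos hne]
  exact le_antisymm (Finset.min'_le _ _ hv) (h _ (ρ.min'_mem hne))

noncomputable def g (ρ : Finset ℕ) : ℝ := 1/2 - (1/2 : ℝ) ^ (mmin ρ + 2)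

lemma g_lb (ρ : Finset ℕ) : (1/4 : ℝ) ≤ g ρ := by
  have h : (1/2:ℝ) ^ (mmin ρ + 2) ≤ (1/2:ℝ)^2 :=
    pow_le_pow_of_le_one (by norm_num) (by norm_num) (by omega)
  have : ((1:ℝ)/2)^2 = 1/4 := by norm_num
  rw [g]; linarith
lemma g_ub (ρ : Finset ℕ) : g ρ < 1/2 := by
  have h : (0:ℝ) < (1/2:ℝ) ^ (mmin ρ + 2) := pow_pos (by norm_num) _
  rw [g]; linarith

lemma g_strict {π τ : Finset ℕ} (h : mmin π < mmin τ) : g π < g τ := by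
  have : (1/2:ℝ) ^ (mmin τ + 2) < (1/2:ℝ) ^ (mmin π + 2) :=
    pow_lt_pow_right_of_lt_one₀ (by norm_num) (by norm_num) (by omega)
  rw [g, g]; linarith

variable {K : Finset (Finset ℕ)}

lemma lex_facet {σ τ : Finset ℕ} (h : LexGrad K σ τ) : IsFacet σ τ := by
  obtain ⟨hσ, v, hvσ, hτ, hτK, hvlt, hmin⟩ := h
  subst hτ
  exact ⟨Finset.subset_insert _ _, Finset.card_insert_of_notMem hvσ⟩

lemma partner_unique {σ τ τ' : Finset ℕ} (h : LexGrad K σ τ) (h' : LexGrad K σ τ') :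
    τ = τ' := by
  obtain ⟨hσ, v, hvσ, hτ, hτK, hvlt, hmin⟩ := h
  obtain ⟨hσ', v', hvσ', hτ', hτ'K, hvlt', hmin'⟩ := h'
  have h1 : v ≤ v' := hmin v' hvσ' (by rwa [← hτ'])
  have h2 : v' ≤ v := hmin' v hvσ (by rwa [← hτ])
  rw [hτ, hτ', le_antisymm h1 h2]

lemma lower_unique {σ σ' τ : Finset ℕ} (h : LexGrad K σ τ) (h' : LexGrad K σ' τ) :
    σ = σ' := by
  obtain ⟨hσ, v, hvσ, hτ, hτK, hvlt, hmin⟩ := h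
  obtain ⟨hσ', v', hvσ', hτ', hτ'K, hvlt', hmin'⟩ := h'
  have hvv : v = v' := by
    by_contra hne
    have h1 : v ∈ insert v' σ' := by rw [← hτ', hτ]; exact Finset.mem_insert_self _ _
    have h2 : v' ∈ insert v σ := by rw [← hτ, hτ']; exact Finset.mem_insert_self _ _
    rcases Finset.mem_insert.1 h1 with h | h
    · exact hne h
    · rcases Finset.mem_insert.1 h2 with h' | h'
      · exact hne h'.symm
      · exact absurd (hvlt _ h') (not_lt.2 (le_of_lt (hvlt' _ h)))
  have : (insert v σ).erase v = (insert v' σ').erase v' := by rw [← hτ, ← hτ', hvv]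
  rwa [Finset.erase_insert hvσ, Finset.erase_insert hvσ'] at this

lemma not_lower_and_upper (hK : IsComplex K) {σ τ ρ : Finset ℕ}
    (h : LexGrad K σ τ) (h' : LexGrad K ρ σ) : False := by
  obtain ⟨hσ, v, hvσ, hτ, hτK, hvlt, hmin⟩ := h
  obtain ⟨hρ, u, huρ, hσu, hσK, hult, hmin'⟩ := h'
  have hu : u ∈ σ := by rw [hσu]; exact Finset.mem_insert_self _ _
  have hvu : v < u := hvlt u hu
  have hvρ : v ∉ ρ := fun hv => hvσ (by rw [hσu]; exact Finset.mem_insert_of_mem hv)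
  have hsub : insert v ρ ⊆ τ := by
    rw [hτ, hσu]
    intro x hx
    rcases Finset.mem_insert.1 hx with h | h
    · exact h ▸ Finset.mem_insert_self _ _
    · exact Finset.mem_insert_of_mem (Finset.mem_insert_of_mem h)
  have hmem : insert v ρ ∈ K :=
    hK.2 τ hτK _ hsub ⟨v, Finset.mem_insert_self _ _⟩
  exact absurd (hmin' v hvρ hmem) (not_le.2 hvu)

lemma lemD {σ π τ : Finset ℕ} (h : LexGrad K σ π) (hτK : τ ∈ K)
    (hsub : σ ⊆ τ) (hcard : τ.card = σ.card + 1) (hne : π ≠ τ) :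
    mmin π < mmin τ := by
  obtain ⟨hσ, v, hvσ, hπ, hπK, hvlt, hmin⟩ := h
  have hmπ : mmin π = v := by
    apply mmin_eq (by rw [hπ]; exact Finset.mem_insert_self _ _)
    intro w hw
    rw [hπ] at hw
    rcases Finset.mem_insert.1 hw with h | h
    · exact h ▸ le_refl _
    · exact le_of_lt (hvlt _ h)
  have hss : σ ⊂ τ := Finset.ssubset_iff_subset_ne.2 ⟨hsub, by
    intro h; rw [h] at hcard; omega⟩
  obtain ⟨x, hxτ, hxσ⟩ := Finset.exists_of_ssubset hss
  have hins : insert x σ = τ := by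
    apply Finset.eq_of_subset_of_card_le
    · exact Finset.insert_subset hxτ hsub
    · rw [Finset.card_insert_of_notMem hxσ, hcard]
  have hvx : v ≤ x := hmin x hxσ (by rwa [hins])
  have hvx' : v ≠ x := by
    intro h; apply hne; rw [hπ, h, hins]
  rw [hmπ]
  have hmem : mmin τ ∈ insert x σ := by
    rw [hins]; exact mmin_mem ⟨x, hxτ⟩
  rcases Finset.mem_insert.1 hmem with h | h
  · rw [h]; omega
  · exact hvlt _ h

open Classical in
noncomputable def f (K : Finset (Finset ℕ)) : Finset ℕ → ℝ := fun σ =>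
  if h : ∃ τ, LexGrad K σ τ then σ.card + g h.choose
  else if _h2 : ∃ ρ, LexGrad K ρ σ then (σ.card : ℝ) - 1 + g σ
  else σ.card

lemma f_lower {σ τ : Finset ℕ} (h : LexGrad K σ τ) : f K σ = σ.card + g τ := by
  have he : ∃ τ, LexGrad K σ τ := ⟨τ, h⟩
  simp only [f, dif_pos he]
  rw [partner_unique he.choose_spec h]

lemma f_upper (hK : IsComplex K) {ρ σ : Finset ℕ} (h : LexGrad K ρ σ) :
    f K σ = (σ.card : ℝ) - 1 + g σ := by
  have hnl : ¬∃ τ, LexGrad K σ τ := fun ⟨τ, h'⟩ => not_lower_and_upper hK h' h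
  have h2 : ∃ ρ, LexGrad K ρ σ := ⟨ρ, h⟩
  simp only [f, dif_neg hnl, dif_pos h2]

lemma f_none {σ : Finset ℕ} (h1 : ¬∃ τ, LexGrad K σ τ) (h2 : ¬∃ ρ, LexGrad K ρ σ) :
    f K σ = σ.card := by
  simp only [f, dif_neg h1, dif_neg h2]

lemma f_lt (σ : Finset ℕ) : f K σ < (σ.card : ℝ) + 1/2 := by
  by_cases h1 : ∃ τ, LexGrad K σ τ
  · rw [f, dif_pos h1]; have := g_ub h1.choose; linarith
  · by_cases h2 : ∃ ρ, LexGrad K ρ σ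
    · rw [f, dif_neg h1, dif_pos h2]; have := g_ub σ; linarith
    · rw [f, dif_neg h1, dif_neg h2]; linarith

lemma f_le_of_not_lower {σ : Finset ℕ} (h1 : ¬∃ τ, LexGrad K σ τ) :
    f K σ ≤ (σ.card : ℝ) := by
  by_cases h2 : ∃ ρ, LexGrad K ρ σ
  · rw [f, dif_neg h1, dif_pos h2]; have := g_ub σ; linarith
  · rw [f, dif_neg h1, dif_neg h2]

end Stmt7Aux

open Stmt7Aux in
/-- There is a discrete Morse function on `K` whose gradient pairs are exactly
the lexicographic gradient pairs; in particular, the lexicographic gradient is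
a discrete vector field on `K`. -/
theorem stmt7 (K : Finset (Finset ℕ)) (hK : IsComplex K) :
    (∃ f : Finset ℕ → ℝ,
      (∀ σ ∈ K, ∀ τ ∈ K, σ ⊆ τ → f σ ≤ f τ) ∧
      (∀ σ τ : Finset ℕ, σ ∈ K → τ ∈ K →
        ((IsFacet σ τ ∧ f σ = f τ) ↔ LexGrad K σ τ))) ∧
    (∀ σ τ : Finset ℕ, LexGrad K σ τ → IsFacet σ τ) ∧
    (∀ σ τ σ' τ' : Finset ℕ, LexGrad K σ τ → LexGrad K σ' τ' →
      (σ = σ' ∨ σ = τ' ∨ τ = σ' ∨ τ = τ') → σ = σ' ∧ τ = τ') := by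
  refine ⟨⟨f K, ?_, ?_⟩, fun σ τ h => lex_facet h, ?_⟩
  · -- monotonicity
    intro σ hσ τ hτ hsub
    rcases eq_or_ne σ τ with rfl | hne
    · exact le_refl _
    have hcard : σ.card < τ.card :=
      Finset.card_lt_card (Finset.ssubset_iff_subset_ne.2 ⟨hsub, hne⟩)
    have hcardR : (σ.card : ℝ) + 1 ≤ (τ.card : ℝ) := by exact_mod_cast hcard
    by_cases hτl : ∃ ρ', LexGrad K τ ρ'
    · rw [f_lower hτl.choose_spec]
      have := g_lb hτl.choose
      have := f_lt (K := K) σ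
      linarith
    by_cases hτu : ∃ ρ, LexGrad K ρ τ
    · rw [f_upper hK hτu.choose_spec]
      have hgτ := g_lb τ
      by_cases hσl : ∃ π, LexGrad K σ π
      · rw [f_lower hσl.choose_spec]
        rcases Nat.lt_or_ge (σ.card + 1) τ.card with hc | hc
        · have : (σ.card : ℝ) + 2 ≤ (τ.card : ℝ) := by exact_mod_cast hc
          have := g_ub hσl.choose
          linarith
        · have hcc : τ.card = σ.card + 1 := le_antisymm hc hcard
          rcases eq_or_ne hσl.choose τ with heq | hne'
          · rw [heq]
            have : (τ.card : ℝ) = (σ.card : ℝ) + 1 := by exact_mod_cast hcc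
            linarith
          · have := g_strict (lemD hσl.choose_spec hτ hsub hcc hne')
            have : (τ.card : ℝ) = (σ.card : ℝ) + 1 := by exact_mod_cast hcc
            linarith [g_strict (lemD hσl.choose_spec hτ hsub hcc hne')]
      · have := f_le_of_not_lower (K := K) hσl
        linarith
    · rw [f_none hτl hτu]
      have := f_lt (K := K) σ
      linarith
  · -- iff
    intro σ τ hσ hτ
    constructor
    · rintro ⟨⟨hsub, hcard⟩, hfe⟩
      have hcardR : (τ.card : ℝ) = (σ.card : ℝ) + 1 := by exact_mod_cast hcard
      by_cases hσl : ∃ π, LexGrad K σ π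
      · by_cases hτu : ∃ lam, LexGrad K lam τ
        · rw [f_lower hσl.choose_spec, f_upper hK hτu.choose_spec] at hfe
          have hgeq : g hσl.choose = g τ := by linarith
          have heq : hσl.choose = τ := by
            by_contra hne'
            have := g_strict (lemD hσl.choose_spec hτ hsub hcard hne')
            linarith
          exact heq ▸ hσl.choose_spec
        · exfalso
          by_cases hτl : ∃ ρ', LexGrad K τ ρ'
          · rw [f_lower hσl.choose_spec, f_lower hτl.choose_spec] at hfe
            have := g_ub hσl.choose
            have := g_lb hτl.choose
            linarith
          · rw [f_lower hσl.choose_spec, f_none hτl hτu] at hfe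
            have := g_lb hσl.choose
            have := g_ub hσl.choose
            linarith
      · exfalso
        have hfσ := f_le_of_not_lower (K := K) hσl
        by_cases hτl : ∃ ρ', LexGrad K τ ρ'
        · rw [f_lower hτl.choose_spec] at hfe
          have := g_lb hτl.choose
          linarith
        by_cases hτu : ∃ lam, LexGrad K lam τ
        · rw [f_upper hK hτu.choose_spec] at hfe
          have := g_lb τ
          linarith
        · rw [f_none hτl hτu] at hfe
          linarith
    · intro h
      refine ⟨lex_facet h, ?_⟩
      have hcard := (lex_facet h).2
      have hcardR : (τ.card : ℝ) = (σ.card : ℝ) + 1 := by exact_mod_cast hcard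
      rw [f_lower h, f_upper hK h]
      linarith
  · -- vector field
    intro σ τ σ' τ' h h' hd
    rcases hd with rfl | rfl | rfl | rfl
    · exact ⟨rfl, partner_unique h h'⟩
    · exact absurd (not_lower_and_upper hK h h') id
    · exact absurd (not_lower_and_upper hK h' h) id
    · exact ⟨lower_unique h h', rfl⟩
end

section
/- Let X be a finite metric space with a linear order on its points, and let ≤ be the lexicographically refined Vietoris–Rips order on the nonempty subsets of X. Let σ ⊆ X be nonempty and τ a cofacet of σ (τ ⊇ σ with |τ| = |σ| + 1). Then (σ, τ) is an apparent pair of ≤ with diam σ = diam τ if and only if: τ is the colexicographically greatest among the cofacets of σ having diameter equal to diam σ, and σ is the colexicographically least among the facets of τ having diameter equal to diam τ. -/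
/-- The diameter of a finite subset of a metric space. -/
noncomputable def fdiam {X : Type*} [MetricSpace X] (S : Finset X) : ℝ :=
  Metric.diam (S : Set X)

/-- The lexicographically refined Vietoris–Rips order on subsets of a finite
linearly ordered metric space: by diameter, then by dimension (cardinality),
then by reverse colexicographic vertex order. -/
def ripsLe {X : Type*} [MetricSpace X] [LinearOrder X] (σ τ : Finset X) : Prop :=
  σ = τ ∨ fdiam σ < fdiam τ ∨ (fdiam σ = fdiam τ ∧ (σ.card < τ.card ∨
    (σ.card = τ.card ∧ toColex τ < toColex σ)))

lemma fdiam_mono {X : Type*} [MetricSpace X] {σ τ : Finset X} (h : σ ⊆ τ) :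
    fdiam σ ≤ fdiam τ :=
  Metric.diam_mono (Finset.coe_subset.mpr h) τ.finite_toSet.isBounded

/-- For the lexicographically refined Vietoris–Rips order, `(σ, τ)` is an
apparent pair with `diam σ = diam τ` if and only if `τ` is the
colexicographically greatest cofacet of `σ` with diameter `diam σ`, and `σ` is
the colexicographically least facet of `τ` with diameter `diam τ`. -/
theorem stmt8 {X : Type*} [Fintype X] [MetricSpace X] [LinearOrder X]
    (σ τ : Finset X) (hσ : σ.Nonempty)
    (hcofacet : σ ⊆ τ ∧ τ.card = σ.card + 1) :
    ((∀ σ' : Finset X, σ'.Nonempty → σ' ⊆ τ → τ.card = σ'.card + 1 → ripsLe σ' σ) ∧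
     (∀ τ' : Finset X, σ ⊆ τ' → τ'.card = σ.card + 1 → ripsLe τ τ') ∧
     fdiam σ = fdiam τ)
    ↔
    ((fdiam τ = fdiam σ ∧
      ∀ τ' : Finset X, σ ⊆ τ' → τ'.card = σ.card + 1 → fdiam τ' = fdiam σ →
        toColex τ' ≤ toColex τ) ∧
     (fdiam σ = fdiam τ ∧
      ∀ σ' : Finset X, σ'.Nonempty → σ' ⊆ τ → τ.card = σ'.card + 1 → fdiam σ' = fdiam τ →
        toColex σ ≤ toColex σ')) := by
  obtain ⟨hsub, hcard⟩ := hcofacet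
  constructor
  · rintro ⟨h1, h2, h3⟩
    refine ⟨⟨h3.symm, fun τ' hs hc hd => ?_⟩, h3, fun σ' hne hs hc hd => ?_⟩
    · rcases h2 τ' hs hc with h | h | ⟨_, h | ⟨_, h⟩⟩
      · rw [h]
      · rw [hd, h3] at h; exact absurd h (lt_irrefl _)
      · omega
      · exact le_of_lt h
    · rcases h1 σ' hne hs hc with h | h | ⟨heq, h | ⟨_, h⟩⟩
      · rw [h]
      · rw [hd, ← h3] at h; exact absurd h (lt_irrefl _)
      · omega
      · exact le_of_lt h
  · rintro ⟨⟨hd1, hmax⟩, hd2, hmin⟩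
    refine ⟨fun σ' hne hs hc => ?_, fun τ' hs hc => ?_, hd2⟩
    · have hle : fdiam σ' ≤ fdiam σ := by rw [hd2]; exact fdiam_mono hs
      rcases lt_or_eq_of_le hle with h | h
      · exact Or.inr (Or.inl h)
      · have := hmin σ' hne hs hc (by rw [h, hd2])
        rcases eq_or_lt_of_le this with h2 | h2
        · exact Or.inl (toColex_inj.mp h2).symm
        · exact Or.inr (Or.inr ⟨h, Or.inr ⟨by omega, h2⟩⟩)
    · have hle : fdiam τ ≤ fdiam τ' := by rw [hd1]; exact fdiam_mono hs
      rcases lt_or_eq_of_le hle with h | h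
      · exact Or.inr (Or.inl h)
      · have := hmax τ' hs hc (by rw [← h, hd1])
        rcases eq_or_lt_of_le this with h2 | h2
        · exact Or.inl (toColex_inj.mp h2.symm)
        · exact Or.inr (Or.inr ⟨h, Or.inr ⟨by omega, h2⟩⟩)
end

section
/- Let X be a finite metric space with pairwise distinct distances (for distinct 2-element subsets e ≠ e′, diam e ≠ diam e′), and let ≤ be a linear order on the nonempty subsets of X extending the face relation and refining the diameter order (diam σ < diam τ implies σ < τ). Let E be the set of 2-element subsets and T the set of 3-element subsets of X, each linearly ordered by ≤. Let D be the E × T matrix over the two-element field 𝔽₂ with D_{σ τ} = 1 if and only if σ ⊂ τ, let V be a regular upper triangular T × T matrix over 𝔽₂, and suppose R = D·V is reduced. Then for every σ ∈ E and τ ∈ T: R_τ ≠ 0 with pivot index σ and diam σ = diam τ, if and only if (σ, τ) is an apparent pair of ≤ (σ is the maximum facet of τ and τ is the minimum cofacet of σ). In other words, among the persistence pairs in dimension 1, the zero persistence pairs are precisely the apparent pairs. -/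
/-- `i` is the pivot index (with respect to the order `le` on row indices) of
the `j`-th column of `M`: the entry `M i j` is nonzero and every other row
index carrying a nonzero entry in column `j` is `le`-below `i`.
In particular the column is nonzero. -/
def IsPivotLe {I J F : Type*} [Zero F] (le : I → I → Prop)
    (M : Matrix I J F) (i : I) (j : J) : Prop :=
  M i j ≠ 0 ∧ ∀ i' : I, M i' j ≠ 0 → le i' i

/-- Let `X` be a finite metric space with pairwise distinct distances, `le` a
linear order on the nonempty subsets of `X` extending the face relation and
refining the diameter order, `D` the filtration 2-boundary matrix over `𝔽₂`
(rows: edges `E`, columns: triangles `T`), `V` a regular upper triangular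
`T × T` matrix, and `R = D·V` reduced. Then `R_τ ≠ 0` with pivot index `σ` and
`diam σ = diam τ` if and only if `(σ, τ)` is an apparent pair of `le`:
among the persistence pairs in dimension 1, the zero persistence pairs are
precisely the apparent pairs. -/
theorem stmt12 {X : Type*} [Fintype X] [DecidableEq X] [MetricSpace X]
    (hdist : ∀ e e' : Finset X, e.card = 2 → e'.card = 2 → e ≠ e' →
      fdiam e ≠ fdiam e')
    (le : Finset X → Finset X → Prop)
    (hrefl : ∀ σ : Finset X, σ.Nonempty → le σ σ)
    (htrans : ∀ σ τ ρ : Finset X, σ.Nonempty → τ.Nonempty → ρ.Nonempty →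
      le σ τ → le τ ρ → le σ ρ)
    (hantisymm : ∀ σ τ : Finset X, σ.Nonempty → τ.Nonempty → le σ τ → le τ σ → σ = τ)
    (htotal : ∀ σ τ : Finset X, σ.Nonempty → τ.Nonempty → le σ τ ∨ le τ σ)
    (hface : ∀ σ τ : Finset X, σ.Nonempty → τ.Nonempty → σ ⊆ τ → le σ τ)
    (hdiam : ∀ σ τ : Finset X, σ.Nonempty → τ.Nonempty →
      fdiam σ < fdiam τ → le σ τ ∧ ¬ le τ σ)
    (D : Matrix {e : Finset X // e.card = 2} {t : Finset X // t.card = 3} (ZMod 2))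
    (hD : ∀ (e : {e : Finset X // e.card = 2}) (t : {t : Finset X // t.card = 3}),
      D e t = if e.1 ⊆ t.1 then 1 else 0)
    (V : Matrix {t : Finset X // t.card = 3} {t : Finset X // t.card = 3} (ZMod 2))
    (hV : IsUnit V)
    (hVut : ∀ t₁ t₂ : {t : Finset X // t.card = 3}, t₁ ≠ t₂ → le t₂.1 t₁.1 →
      V t₁ t₂ = 0)
    (hred : ∀ (t₁ t₂ : {t : Finset X // t.card = 3}) (e : {e : Finset X // e.card = 2}),
      IsPivotLe (fun a b => le a.1 b.1) (D * V) e t₁ →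
      IsPivotLe (fun a b => le a.1 b.1) (D * V) e t₂ → t₁ = t₂) :
    ∀ (σ : {e : Finset X // e.card = 2}) (τ : {t : Finset X // t.card = 3}),
      (IsPivotLe (fun a b => le a.1 b.1) (D * V) σ τ ∧ fdiam σ.1 = fdiam τ.1) ↔
      (σ.1 ⊆ τ.1 ∧
       (∀ σ' : Finset X, σ'.Nonempty → σ' ⊆ τ.1 → τ.1.card = σ'.card + 1 → le σ' σ.1) ∧
       (∀ τ' : Finset X, σ.1 ⊆ τ' → τ'.card = σ.1.card + 1 → le τ.1 τ')) := by
  classical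
  have hne2 : ∀ e : Finset X, e.card = 2 → e.Nonempty := fun e h =>
    Finset.card_pos.mp (by omega)
  have hne3 : ∀ t : Finset X, t.card = 3 → t.Nonempty := fun t h =>
    Finset.card_pos.mp (by omega)
  have hmono : ∀ s t : Finset X, s ⊆ t → fdiam s ≤ fdiam t := fun s t h =>
    Metric.diam_mono (by exact_mod_cast h) t.finite_toSet.isBounded
  have hdle : ∀ s t : Finset X, s.Nonempty → t.Nonempty → le s t →
      fdiam s ≤ fdiam t := by
    intro s t hs ht hst
    by_contra h
    exact (hdiam t s ht hs (lt_of_not_ge h)).2 hst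
  -- a linear order instance on triangles
  letI lo : LinearOrder {t : Finset X // t.card = 3} :=
    { le := fun a b => le a.1 b.1
      lt := fun a b => le a.1 b.1 ∧ ¬ le b.1 a.1
      lt_iff_le_not_ge := fun _ _ => Iff.rfl
      le_refl := fun a => hrefl a.1 (hne3 a.1 a.2)
      le_trans := fun a b c hab hbc =>
        htrans a.1 b.1 c.1 (hne3 a.1 a.2) (hne3 b.1 b.2) (hne3 c.1 c.2) hab hbc
      le_antisymm := fun a b hab hba =>
        Subtype.ext (hantisymm a.1 b.1 (hne3 a.1 a.2) (hne3 b.1 b.2) hab hba)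
      le_total := fun a b => htotal a.1 b.1 (hne3 a.1 a.2) (hne3 b.1 b.2)
      toDecidableLE := fun a b => Classical.dec _ }
  -- V has nonzero diagonal
  have hBT : @Matrix.BlockTriangular _ _ (ZMod 2)
      (@Preorder.toLT _ (@PartialOrder.toPreorder _ (@LinearOrder.toPartialOrder _ lo))) _
      V id := by
    intro i j hij
    have h1 : le j.1 i.1 := hij.1
    have h2 : ¬ le i.1 j.1 := hij.2
    exact hVut i j (fun h => h2 (by rw [h]; exact hrefl j.1 (hne3 j.1 j.2))) h1
  have hdetu : IsUnit V.det := (Matrix.isUnit_iff_isUnit_det V).mp hV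
  have hdiag : ∀ t, V t t ≠ 0 := by
    rw [Matrix.det_of_upperTriangular hBT] at hdetu
    intro t ht
    exact hdetu.ne_zero (Finset.prod_eq_zero (Finset.mem_univ t) ht)
  -- entries of D * V
  have hDV : ∀ (e : {e : Finset X // e.card = 2}) (t : {t : Finset X // t.card = 3}),
      (D * V) e t = ∑ ρ, (if e.1 ⊆ ρ.1 then V ρ t else 0) := by
    intro e t
    rw [Matrix.mul_apply]
    refine Finset.sum_congr rfl fun ρ _ => ?_
    rw [hD]
    split <;> simp
  have hL2 : ∀ (e : {e : Finset X // e.card = 2}) (t : {t : Finset X // t.card = 3}),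
      (D * V) e t ≠ 0 → ∃ ρ, e.1 ⊆ ρ.1 ∧ V ρ t ≠ 0 := by
    intro e t h
    rw [hDV] at h
    obtain ⟨ρ, -, hρ⟩ := Finset.exists_ne_zero_of_sum_ne_zero h
    by_cases hsub : e.1 ⊆ ρ.1
    · exact ⟨ρ, hsub, by simpa [hsub] using hρ⟩
    · simp [hsub] at hρ
  have hL3 : ∀ ρ t : {t : Finset X // t.card = 3}, V ρ t ≠ 0 → le ρ.1 t.1 := by
    intro ρ t h
    by_cases he : ρ = t
    · subst he; exact hrefl ρ.1 (hne3 ρ.1 ρ.2)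
    · rcases htotal ρ.1 t.1 (hne3 ρ.1 ρ.2) (hne3 t.1 t.2) with h' | h'
      · exact h'
      · exact absurd (hVut ρ t he h') h
  -- key: apparent pair implies pivot with equal diameters
  have key : ∀ (σ : {e : Finset X // e.card = 2}) (τ : {t : Finset X // t.card = 3}),
      σ.1 ⊆ τ.1 →
      (∀ σ' : Finset X, σ'.Nonempty → σ' ⊆ τ.1 → τ.1.card = σ'.card + 1 → le σ' σ.1) →
      (∀ τ' : Finset X, σ.1 ⊆ τ' → τ'.card = σ.1.card + 1 → le τ.1 τ') →
      IsPivotLe (fun a b => le a.1 b.1) (D * V) σ τ ∧ fdiam σ.1 = fdiam τ.1 := by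
    intro σ τ hsub hmaxf hminc
    have hστ : fdiam σ.1 = fdiam τ.1 := by
      refine le_antisymm (hmono _ _ hsub) ?_
      refine Metric.diam_le_of_forall_dist_le Metric.diam_nonneg ?_
      intro x hx y hy
      by_cases hxy : x = y
      · subst hxy
        simpa [fdiam] using (Metric.diam_nonneg (s := ((σ.1 : Finset X) : Set X)))
      · have hcard : ({x, y} : Finset X).card = 2 := Finset.card_pair hxy
        have hsub' : ({x, y} : Finset X) ⊆ τ.1 := by
          intro z hz
          rcases Finset.mem_insert.mp hz with hz | hz
          · subst hz; exact_mod_cast hx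
          · rw [Finset.mem_singleton] at hz; subst hz; exact_mod_cast hy
        have hle' := hmaxf {x, y} (hne2 _ hcard) hsub' (by rw [hcard, τ.2])
        have hle'' := hdle _ _ (hne2 _ hcard) (hne2 σ.1 σ.2) hle'
        have hd : fdiam ({x, y} : Finset X) = dist x y := by
          show Metric.diam _ = _
          rw [Finset.coe_insert, Finset.coe_singleton, Metric.diam_pair]
        linarith
    refine ⟨⟨?_, ?_⟩, hστ⟩
    · have hone : (D * V) σ τ = V τ τ := by
        rw [hDV, Finset.sum_eq_single τ]
        · simp [hsub]
        · intro ρ _ hρτ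
          by_cases hs : σ.1 ⊆ ρ.1
          · have hle1 := hminc ρ.1 hs (by rw [σ.2, ρ.2])
            simp [hs, hVut ρ τ hρτ hle1]
          · simp [hs]
        · intro h; exact absurd (Finset.mem_univ τ) h
      rw [hone]; exact hdiag τ
    · intro σ' h'
      obtain ⟨ρ, hsub', hVρ⟩ := hL2 σ' τ h'
      have hleρ := hL3 ρ τ hVρ
      by_cases heq : σ' = σ
      · subst heq; exact hrefl σ'.1 (hne2 _ σ'.2)
      · have h1 : fdiam σ'.1 ≤ fdiam τ.1 :=
          le_trans (hmono _ _ hsub') (hdle _ _ (hne3 _ ρ.2) (hne3 _ τ.2) hleρ)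
        have hne : fdiam σ'.1 ≠ fdiam σ.1 :=
          hdist _ _ σ'.2 σ.2 (fun h => heq (Subtype.ext h))
        have hlt : fdiam σ'.1 < fdiam σ.1 := lt_of_le_of_ne (hστ ▸ h1) hne
        exact (hdiam _ _ (hne2 _ σ'.2) (hne2 _ σ.2) hlt).1
  intro σ τ
  constructor
  · rintro ⟨⟨hnz, hpiv⟩, hdm⟩
    obtain ⟨ρ, hsubρ, hVρ⟩ := hL2 σ τ hnz
    have hleρτ := hL3 ρ τ hVρ
    have hdρ : fdiam ρ.1 = fdiam σ.1 := by
      have h1 : fdiam σ.1 ≤ fdiam ρ.1 := hmono _ _ hsubρ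
      have h2 : fdiam ρ.1 ≤ fdiam τ.1 :=
        hdle _ _ (hne3 _ ρ.2) (hne3 _ τ.2) hleρτ
      linarith
    obtain ⟨τ₀, hτ₀S, hτ₀min⟩ :=
      Finset.exists_min_image
        (Finset.univ.filter (fun t : {t : Finset X // t.card = 3} => σ.1 ⊆ t.1)) id
        ⟨ρ, by simp [hsubρ]⟩
    have hsub₀ : σ.1 ⊆ τ₀.1 := by simpa using hτ₀S
    have hminc : ∀ τ' : Finset X, σ.1 ⊆ τ' → τ'.card = σ.1.card + 1 → le τ₀.1 τ' := by
      intro τ' h1 h2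
      have h3 : τ'.card = 3 := by rw [h2, σ.2]
      exact hτ₀min ⟨τ', h3⟩ (by simp [h1])
    have hd₀ : fdiam τ₀.1 = fdiam σ.1 := by
      have h1 : fdiam σ.1 ≤ fdiam τ₀.1 := hmono _ _ hsub₀
      have h2 : le τ₀.1 ρ.1 := hminc ρ.1 hsubρ (by rw [σ.2, ρ.2])
      have h3 := hdle _ _ (hne3 _ τ₀.2) (hne3 _ ρ.2) h2
      linarith
    have hmaxf : ∀ σ' : Finset X, σ'.Nonempty → σ' ⊆ τ₀.1 →
        τ₀.1.card = σ'.card + 1 → le σ' σ.1 := by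
      intro σ' h1 h2 h3
      have hc2 : σ'.card = 2 := by have := τ₀.2; omega
      by_cases heq : σ' = σ.1
      · rw [heq]; exact hrefl _ (hne2 _ σ.2)
      · have h4 : fdiam σ' ≤ fdiam τ₀.1 := hmono _ _ h2
        have h5 : fdiam σ' < fdiam σ.1 :=
          lt_of_le_of_ne (hd₀ ▸ h4) (hdist _ _ hc2 σ.2 heq)
        exact (hdiam _ _ h1 (hne2 _ σ.2) h5).1
    obtain ⟨hp₀, -⟩ := key σ τ₀ hsub₀ hmaxf hminc
    have hττ₀ : τ = τ₀ := hred τ τ₀ σ ⟨hnz, hpiv⟩ hp₀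
    subst hττ₀
    exact ⟨hsub₀, hmaxf, hminc⟩
  · rintro ⟨h1, h2, h3⟩
    exact key σ τ h1 h2 h3
end

section
/- Let D be an I × J matrix over a field, where I and J are finite linearly ordered index sets. Suppose V and W are regular upper triangular J × J matrices such that both R = D·V and R′ = D·W are reduced. Then for every j ∈ J, the column R_j is zero if and only if R′_j is zero, and if both are nonzero then they have the same pivot index. -/
lemma isPivot_unique {I F : Type*} [LinearOrder I] [Zero F] {v : I → F} {i i' : I}
    (h : IsPivot v i) (h' : IsPivot v i') : i = i' := by
  obtain ⟨h1, h2⟩ := h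
  obtain ⟨h1', h2'⟩ := h'
  exact le_antisymm (h2' i h1) (h2 i' h1')

lemma key13 {F I J : Type*} [Field F] [Fintype I] [Fintype J]
    [LinearOrder I] [LinearOrder J] [DecidableEq J]
    (R R' : Matrix I J F) (U : Matrix J J F) (hRU : R * U = R')
    (hUut : ∀ j₁ j₂ : J, j₂ < j₁ → U j₁ j₂ = 0)
    (hUdiag : ∀ j : J, U j j ≠ 0)
    (hR : ReducedMat R) (hR' : ReducedMat R') :
    ∀ j : J, ((fun r => R r j) = 0 → (fun r => R' r j) = 0) ∧
      (∀ i : I, IsPivot (fun r => R r j) i → IsPivot (fun r => R' r j) i) := by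
  classical
  intro j
  induction j using WellFoundedLT.induction with
  | _ j IH =>
  set S : Finset I := Finset.univ.filter (fun i => ∃ k, U k j ≠ 0 ∧ R i k ≠ 0) with hS
  have memS : ∀ i : I, i ∈ S ↔ ∃ k, U k j ≠ 0 ∧ R i k ≠ 0 := by
    intro i; simp [hS]
  -- core claim
  have core : S.Nonempty →
      ∃ i₀ : I, IsPivot (fun r => R r j) i₀ ∧ IsPivot (fun r => R' r j) i₀ := by
    intro hSne
    set i₀ := S.max' hSne with hi₀
    obtain ⟨k₀, hUk₀, hRk₀⟩ := (memS i₀).mp (S.max'_mem hSne)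
    have hk₀j : k₀ ≤ j := by
      by_contra h
      exact hUk₀ (hUut k₀ j (lt_of_not_ge h))
    have pivk₀ : IsPivot (fun r => R r k₀) i₀ := by
      refine ⟨hRk₀, fun i' hi' => ?_⟩
      exact S.le_max' i' ((memS i').mpr ⟨k₀, hUk₀, hi'⟩)
    have hval : R' i₀ j = R i₀ k₀ * U k₀ j := by
      rw [← hRU, Matrix.mul_apply]
      refine Finset.sum_eq_single k₀ ?_ (by simp)
      intro k _ hk
      by_contra hne
      have hRik : R i₀ k ≠ 0 := fun h => hne (by rw [h, zero_mul])
      have hUkj : U k j ≠ 0 := fun h => hne (by rw [h, mul_zero])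
      have pivk : IsPivot (fun r => R r k) i₀ := by
        refine ⟨hRik, fun i' hi' => ?_⟩
        exact S.le_max' i' ((memS i').mpr ⟨k, hUkj, hi'⟩)
      exact hk (hR k k₀ i₀ pivk pivk₀)
    have pivR'j : IsPivot (fun r => R' r j) i₀ := by
      refine ⟨by show R' i₀ j ≠ 0; rw [hval]; exact mul_ne_zero hRk₀ hUk₀, fun i' hi' => ?_⟩
      have hi'' : (R * U) i' j ≠ 0 := by rw [hRU]; exact hi'
      rw [Matrix.mul_apply] at hi''
      rename' hi'' => hi'
      obtain ⟨k, _, hk⟩ := Finset.exists_ne_zero_of_sum_ne_zero hi'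
      have hRik : R i' k ≠ 0 := fun h => hk (by rw [h, zero_mul])
      have hUkj : U k j ≠ 0 := fun h => hk (by rw [h, mul_zero])
      exact S.le_max' i' ((memS i').mpr ⟨k, hUkj, hRik⟩)
    -- k₀ = j
    have hk₀ : k₀ = j := by
      rcases lt_or_eq_of_le hk₀j with hlt | heq
      · exfalso
        have pivR'k₀ := (IH k₀ hlt).2 i₀ pivk₀
        exact ne_of_lt hlt (hR' k₀ j i₀ pivR'k₀ pivR'j)
      · exact heq
    rw [hk₀] at pivk₀
    exact ⟨i₀, pivk₀, pivR'j⟩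
  constructor
  · intro hRj
    by_contra hR'j
    have : ∃ i, R' i j ≠ 0 := by
      by_contra h
      push_neg at h
      exact hR'j (funext fun r => h r)
    obtain ⟨i, hi⟩ := this
    have hiS : i ∈ S := by
      rw [← hRU, Matrix.mul_apply] at hi
      obtain ⟨k, _, hk⟩ := Finset.exists_ne_zero_of_sum_ne_zero hi
      exact (memS i).mpr ⟨k, fun h => hk (by rw [h, mul_zero]),
        fun h => hk (by rw [h, zero_mul])⟩
    obtain ⟨i₀, piv₀, _⟩ := core ⟨i, hiS⟩
    exact piv₀.1 (congrFun hRj i₀)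
  · intro i hpiv
    have hiS : i ∈ S := (memS i).mpr ⟨j, hUdiag j, hpiv.1⟩
    obtain ⟨i₀, piv₀, piv₀'⟩ := core ⟨i, hiS⟩
    rwa [isPivot_unique hpiv piv₀]

/-- Uniqueness of the persistence pairing: if `V` and `W` are regular upper
triangular matrices such that `R = D·V` and `R′ = D·W` are both reduced, then
for every column index `j`, `R_j = 0` iff `R′_j = 0`, and if both are nonzero
they have the same pivot index. -/
theorem stmt13 {F I J : Type*} [Field F] [Fintype I] [Fintype J]
    [LinearOrder I] [LinearOrder J] [DecidableEq J]
    (D : Matrix I J F)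
    (V W : Matrix J J F) (hV : IsUnit V) (hW : IsUnit W)
    (hVut : ∀ j₁ j₂ : J, j₂ < j₁ → V j₁ j₂ = 0)
    (hWut : ∀ j₁ j₂ : J, j₂ < j₁ → W j₁ j₂ = 0)
    (hRV : ReducedMat (D * V)) (hRW : ReducedMat (D * W)) :
    ∀ j : J,
      ((fun r => (D * V) r j) = 0 ↔ (fun r => (D * W) r j) = 0) ∧
      (∀ i i' : I, IsPivot (fun r => (D * V) r j) i →
        IsPivot (fun r => (D * W) r j) i' → i = i') := by
  classical
  have hVdet : IsUnit V.det := (Matrix.isUnit_iff_isUnit_det V).mp hV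
  have hWdet : IsUnit W.det := (Matrix.isUnit_iff_isUnit_det W).mp hW
  haveI : Invertible V := hV.invertible
  haveI : Invertible W := hW.invertible
  have hVbt : V.BlockTriangular id := fun j₁ j₂ h => hVut j₁ j₂ h
  have hWbt : W.BlockTriangular id := fun j₁ j₂ h => hWut j₁ j₂ h
  -- triangularity and unit of U := V⁻¹ * W and U' := W⁻¹ * V
  have hUbt : (V⁻¹ * W).BlockTriangular id :=
    (Matrix.blockTriangular_inv_of_blockTriangular hVbt).mul hWbt
  have hU'bt : (W⁻¹ * V).BlockTriangular id :=
    (Matrix.blockTriangular_inv_of_blockTriangular hWbt).mul hVbt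
  have hUU' : (V⁻¹ * W) * (W⁻¹ * V) = 1 := by
    rw [Matrix.mul_assoc, ← Matrix.mul_assoc W, Matrix.mul_nonsing_inv _ hWdet,
      Matrix.one_mul, Matrix.nonsing_inv_mul _ hVdet]
  have hU'U : (W⁻¹ * V) * (V⁻¹ * W) = 1 := by
    rw [Matrix.mul_assoc, ← Matrix.mul_assoc V, Matrix.mul_nonsing_inv _ hVdet,
      Matrix.one_mul, Matrix.nonsing_inv_mul _ hWdet]
  have hUunit : IsUnit (V⁻¹ * W) := ⟨⟨V⁻¹ * W, W⁻¹ * V, hUU', hU'U⟩, rfl⟩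
  have hU'unit : IsUnit (W⁻¹ * V) := ⟨⟨W⁻¹ * V, V⁻¹ * W, hU'U, hUU'⟩, rfl⟩
  have diag : ∀ (U : Matrix J J F), U.BlockTriangular id → IsUnit U →
      ∀ j, U j j ≠ 0 := by
    intro U hbt hu j
    have hdet : U.det ≠ 0 := ((Matrix.isUnit_iff_isUnit_det U).mp hu).ne_zero
    rw [Matrix.det_of_upperTriangular hbt] at hdet
    intro h
    exact hdet (Finset.prod_eq_zero (Finset.mem_univ j) h)
  have hmul : (D * V) * (V⁻¹ * W) = D * W := by
    rw [← Matrix.mul_assoc, Matrix.mul_assoc D, Matrix.mul_nonsing_inv _ hVdet,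
      Matrix.mul_one]
  have hmul' : (D * W) * (W⁻¹ * V) = D * V := by
    rw [← Matrix.mul_assoc, Matrix.mul_assoc D, Matrix.mul_nonsing_inv _ hWdet,
      Matrix.mul_one]
  have key₁ := key13 (D * V) (D * W) (V⁻¹ * W) hmul
    (fun j₁ j₂ h => hUbt h) (diag _ hUbt hUunit) hRV hRW
  have key₂ := key13 (D * W) (D * V) (W⁻¹ * V) hmul'
    (fun j₁ j₂ h => hU'bt h) (diag _ hU'bt hU'unit) hRW hRV
  intro j
  refine ⟨⟨(key₁ j).1, (key₂ j).1⟩, fun i i' h h' => ?_⟩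
  exact isPivot_unique ((key₁ j).2 i h) h'
end

section
/- Let M be an I × J matrix over a field, where I and J are finite linearly ordered index sets, and suppose no two nonzero columns of M have the same pivot index. Then every column of M is reduced in the following sense: for every j ∈ J with M_j ≠ 0 and every family of scalars (λ_k)_{k ≤ j} with λ_j ≠ 0, the linear combination v = Σ_{k ≤ j} λ_k M_k is nonzero and pivot(v) ≥ pivot(M_j). -/
/-- If no two nonzero columns of `M` have the same pivot index, then every
column of `M` is reduced: for every `j` with `M_j ≠ 0` and scalars `λ_k`
(`k ≤ j`) with `λ_j ≠ 0`, the combination `v = ∑_{k ≤ j} λ_k M_k` is nonzero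
and `pivot(v) ≥ pivot(M_j)`. -/
theorem stmt16 {F I J : Type*} [Field F] [Fintype I] [Fintype J]
    [LinearOrder I] [LinearOrder J]
    (M : Matrix I J F)
    (hred : ∀ j₁ j₂ i, IsPivot (fun r => M r j₁) i → IsPivot (fun r => M r j₂) i →
      j₁ = j₂) :
    ∀ j : J, (fun r => M r j) ≠ 0 → ∀ lam : J → F, lam j ≠ 0 →
      (fun r => ∑ k ∈ Finset.univ.filter (· ≤ j), lam k * M r k) ≠ 0 ∧
      (∀ i i' : I, IsPivot (fun r => M r j) i →
        IsPivot (fun r => ∑ k ∈ Finset.univ.filter (· ≤ j), lam k * M r k) i' →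
        i ≤ i') := by
  intro j hj lam hlam
  -- the set of rows supported by some relevant column
  classical
  set T : Finset I := Finset.univ.filter (fun i => ∃ k, k ≤ j ∧ lam k ≠ 0 ∧ M i k ≠ 0)
    with hT
  have hTne : T.Nonempty := by
    have : ∃ r, M r j ≠ 0 := by
      by_contra h
      push_neg at h
      exact hj (funext fun r => h r)
    obtain ⟨r, hr⟩ := this
    exact ⟨r, by simp [hT, hlam, hr]; exact ⟨j, le_refl j, hlam, hr⟩⟩
  set m : I := T.max' hTne with hm
  have hmT : m ∈ T := T.max'_mem hTne
  have hle : ∀ i ∈ T, i ≤ m := fun i hi => T.le_max' i hi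
  simp only [hT, Finset.mem_filter, Finset.mem_univ, true_and] at hmT
  obtain ⟨k₀, hk₀j, hk₀lam, hk₀M⟩ := hmT
  have hmem : ∀ i : I, (∃ k, k ≤ j ∧ lam k ≠ 0 ∧ M i k ≠ 0) → i ≤ m := by
    intro i hi
    exact hle i (by simp [hT, hi])
  -- any column k ≤ j with lam k ≠ 0 and nonzero entry at m has pivot m, hence = k₀
  have hpiv₀ : IsPivot (fun r => M r k₀) m :=
    ⟨hk₀M, fun i' hi' => hmem i' ⟨k₀, hk₀j, hk₀lam, hi'⟩⟩
  have huniq : ∀ k, k ≤ j → lam k ≠ 0 → M m k ≠ 0 → k = k₀ := by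
    intro k hkj hklam hkM
    exact hred k k₀ m ⟨hkM, fun i' hi' => hmem i' ⟨k, hkj, hklam, hi'⟩⟩ hpiv₀
  have hvm : (∑ k ∈ Finset.univ.filter (· ≤ j), lam k * M m k) = lam k₀ * M m k₀ := by
    apply Finset.sum_eq_single_of_mem
    · simp [hk₀j]
    · intro k hk hkne
      simp only [Finset.mem_filter, Finset.mem_univ, true_and] at hk
      by_cases h1 : lam k = 0
      · simp [h1]
      by_cases h2 : M m k = 0
      · simp [h2]
      exact absurd (huniq k hk h1 h2) hkne
  have hvm0 : (∑ k ∈ Finset.univ.filter (· ≤ j), lam k * M m k) ≠ 0 := by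
    rw [hvm]; exact mul_ne_zero hk₀lam hk₀M
  constructor
  · intro h
    exact hvm0 (by rw [congrFun h m]; rfl)
  · intro i i' hpi hpi'
    have him : i ≤ m := hmem i ⟨j, le_refl j, hlam, hpi.1⟩
    exact him.trans (hpi'.2 m hvm0)
end
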